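/- Let ℓ ≥ 2, n ≥ 2, and let j, m be natural numbers with 0 ≤ j ≤ ℓ−2 and 0 ≤ m ≤ n−2. Suppose p is an irreducible (n−m)-partition of the set {0, 1, …, ℓ−j−2} (the first ℓ−j−1 elements of Fin ℓ), p̂ is an m-partition of the set {ℓ−j−1, …, ℓ−2}, and b is a block of p that does not contain 0. Then the collection of blocks consisting of all blocks of p̂, all blocks of p other than b, and the block b ∪ {ℓ−1}, is an irreducible n-partition of Fin ℓ. -/

import Mathlib

/-- An `n`-partition of `Fin ℓ` is reducible if some nonempty proper subset of its blocks
has union `{i : Fin ℓ | (i : ℕ) < j}` for some `1 ≤ j < ℓ`. -/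
def Reducible {ℓ : ℕ} (P : Finpartition (Finset.univ : Finset (Fin ℓ))) : Prop :=
  ∃ j : ℕ, 1 ≤ j ∧ j < ℓ ∧ ∃ B : Finset (Finset (Fin ℓ)),
    B.Nonempty ∧ B ⊂ P.parts ∧ B.sup id = Finset.univ.filter (fun i : Fin ℓ => (i : ℕ) < j)

/-- `S ℓ n`: the number of `n`-partitions of `Fin ℓ` (Stirling number of the second kind). -/
noncomputable def S (ℓ n : ℕ) : ℕ :=
  Nat.card {P : Finpartition (Finset.univ : Finset (Fin ℓ)) // P.parts.card = n}

/-- `I ℓ n`: the number of irreducible `n`-partitions of `Fin ℓ`. -/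
noncomputable def I (ℓ n : ℕ) : ℕ :=
  Nat.card {P : Finpartition (Finset.univ : Finset (Fin ℓ)) // P.parts.card = n ∧ ¬ Reducible P}

/-- Combining an irreducible `(n-m)`-partition `p` of `{0, …, ℓ-j-2}`, an `m`-partition
`p̂` of `{ℓ-j-1, …, ℓ-2}`, and inserting `ℓ-1` into a block `b` of `p` not containing `0`,
yields an irreducible `n`-partition of `Fin ℓ`. -/
theorem combined_partition_irreducible (ℓ n j m : ℕ) (hℓ : 2 ≤ ℓ) (hn : 2 ≤ n)
    (hj : j ≤ ℓ - 2) (hm : m ≤ n - 2)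
    (p : Finpartition (Finset.univ.filter fun i : Fin ℓ => (i : ℕ) < ℓ - j - 1))
    (hpcard : p.parts.card = n - m)
    (hpirr : ¬ ∃ j' : ℕ, 1 ≤ j' ∧ j' < ℓ - j - 1 ∧ ∃ B : Finset (Finset (Fin ℓ)),
      B.Nonempty ∧ B ⊂ p.parts ∧
        B.sup id = Finset.univ.filter fun i : Fin ℓ => (i : ℕ) < j')
    (phat : Finpartition
      (Finset.univ.filter fun i : Fin ℓ => ℓ - j - 1 ≤ (i : ℕ) ∧ (i : ℕ) < ℓ - 1))
    (hphatcard : phat.parts.card = m)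
    (b : Finset (Fin ℓ)) (hb : b ∈ p.parts) (hb0 : (⟨0, by omega⟩ : Fin ℓ) ∉ b) :
    ∃ q : Finpartition (Finset.univ : Finset (Fin ℓ)),
      q.parts = phat.parts ∪ p.parts.erase b ∪ {insert (⟨ℓ - 1, by omega⟩ : Fin ℓ) b} ∧
      q.parts.card = n ∧ ¬ Reducible q := by
  set newb : Finset (Fin ℓ) := insert (⟨ℓ - 1, by omega⟩ : Fin ℓ) b with hnewb
  set parts : Finset (Finset (Fin ℓ)) := phat.parts ∪ p.parts.erase b ∪ {newb} with hparts
  have hbne : b.Nonempty := p.nonempty_of_mem_parts hb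
  have hsubp : ∀ c ∈ p.parts, ∀ x ∈ c, (x : ℕ) < ℓ - j - 1 := by
    intro c hc x hx
    have := p.le hc hx
    simpa using this
  have hsubh : ∀ c ∈ phat.parts, ∀ x ∈ c, ℓ - j - 1 ≤ (x : ℕ) ∧ (x : ℕ) < ℓ - 1 := by
    intro c hc x hx
    have := phat.le hc hx
    simpa using this
  have hmemnew : ∀ x : Fin ℓ, x ∈ newb ↔ (x : ℕ) = ℓ - 1 ∨ x ∈ b := by
    intro x
    simp only [hnewb, Finset.mem_insert]
    constructor
    · rintro (rfl | h)
      · left; rfl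
      · right; exact h
    · rintro (h | h)
      · left; exact Fin.ext h
      · right; exact h
  have hmem : ∀ c, c ∈ parts ↔ c ∈ phat.parts ∨ (c ≠ b ∧ c ∈ p.parts) ∨ c = newb := by
    intro c
    simp [hparts, Finset.mem_union, Finset.mem_erase, Finset.mem_singleton]; tauto
  -- disjointness helpers
  have hd_hp : ∀ c ∈ phat.parts, ∀ d ∈ p.parts, Disjoint c d := by
    intro c hc d hd
    rw [Finset.disjoint_left]
    intro x hxc hxd
    have h1 := hsubh c hc x hxc
    have h2 := hsubp d hd x hxd
    omega
  have hd_hnew : ∀ c ∈ phat.parts, Disjoint c newb := by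
    intro c hc
    rw [Finset.disjoint_left]
    intro x hxc hxn
    have h1 := hsubh c hc x hxc
    rcases (hmemnew x).1 hxn with h | h
    · omega
    · have h2 := hsubp b hb x h
      omega
  have hd_pnew : ∀ c ∈ p.parts, c ≠ b → Disjoint c newb := by
    intro c hc hcb
    rw [Finset.disjoint_left]
    intro x hxc hxn
    have h2 := hsubp c hc x hxc
    rcases (hmemnew x).1 hxn with h | h
    · omega
    · exact Finset.disjoint_left.1 (p.disjoint hc hb hcb) hxc h
  -- supIndep
  have hSI : parts.SupIndep id := by
    rw [Finset.supIndep_iff_pairwiseDisjoint]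
    intro c hc d hd hcd
    rcases (hmem c).1 hc with hc1 | ⟨hcb, hc1⟩ | rfl
    · rcases (hmem d).1 hd with hd1 | ⟨hdb, hd1⟩ | rfl
      · exact phat.disjoint hc1 hd1 hcd
      · exact hd_hp c hc1 d hd1
      · exact hd_hnew c hc1
    · rcases (hmem d).1 hd with hd1 | ⟨hdb, hd1⟩ | rfl
      · exact (hd_hp d hd1 c hc1).symm
      · exact p.disjoint hc1 hd1 hcd
      · exact hd_pnew c hc1 hcb
    · rcases (hmem d).1 hd with hd1 | ⟨hdb, hd1⟩ | rfl
      · exact (hd_hnew d hd1).symm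
      · exact (hd_pnew d hd1 hdb).symm
      · exact absurd rfl hcd
  have hSup : parts.sup id = (Finset.univ : Finset (Fin ℓ)) := by
    rw [Finset.eq_univ_iff_forall]
    intro x
    rw [Finset.mem_sup]
    by_cases h1 : (x : ℕ) < ℓ - j - 1
    · have hx : x ∈ p.parts.sup id := by
        rw [p.sup_parts]; simp [h1]
      obtain ⟨c, hc, hxc⟩ := Finset.mem_sup.1 hx
      by_cases hcb : c = b
      · exact ⟨newb, (hmem newb).2 (Or.inr (Or.inr rfl)), (hmemnew x).2 (Or.inr (hcb ▸ hxc))⟩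
      · exact ⟨c, (hmem c).2 (Or.inr (Or.inl ⟨hcb, hc⟩)), hxc⟩
    · by_cases h2 : (x : ℕ) < ℓ - 1
      · have hx : x ∈ phat.parts.sup id := by
          rw [phat.sup_parts]; simp; omega
        obtain ⟨c, hc, hxc⟩ := Finset.mem_sup.1 hx
        exact ⟨c, (hmem c).2 (Or.inl hc), hxc⟩
      · have : (x : ℕ) = ℓ - 1 := by have := x.isLt; omega
        exact ⟨newb, (hmem newb).2 (Or.inr (Or.inr rfl)), (hmemnew x).2 (Or.inl this)⟩
  have hBot : ⊥ ∉ parts := by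
    intro h
    rcases (hmem ⊥).1 h with h1 | ⟨_, h1⟩ | h1
    · exact phat.bot_notMem h1
    · exact p.bot_notMem h1
    · obtain ⟨y, hy⟩ := hbne
      have : y ∈ (⊥ : Finset (Fin ℓ)) := h1 ▸ (hmemnew y).2 (Or.inr hy)
      simpa using this
  refine ⟨⟨parts, hSI, hSup, hBot⟩, rfl, ?_, ?_⟩
  · -- cardinality
    have hd1 : Disjoint phat.parts (p.parts.erase b) := by
      rw [Finset.disjoint_left]
      intro c hc hcp
      obtain ⟨y, hy⟩ := phat.nonempty_of_mem_parts hc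
      have h1 := hsubh c hc y hy
      have h2 := hsubp c (Finset.mem_of_mem_erase hcp) y hy
      omega
    have hd2 : Disjoint (phat.parts ∪ p.parts.erase b) {newb} := by
      rw [Finset.disjoint_right]
      intro c hc hcu
      rw [Finset.mem_singleton] at hc
      subst hc
      have hxn : (⟨ℓ - 1, by omega⟩ : Fin ℓ) ∈ newb := Finset.mem_insert_self _ _
      rcases Finset.mem_union.1 hcu with h1 | h1
      · have := (hsubh _ h1 _ hxn).2
        simp at this
      · have := hsubp _ (Finset.mem_of_mem_erase h1) _ hxn
        simp at this
        omega
    show parts.card = n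
    rw [hparts, Finset.card_union_of_disjoint hd2, Finset.card_union_of_disjoint hd1,
      Finset.card_erase_of_mem hb, hphatcard, hpcard, Finset.card_singleton]
    omega
  · -- irreducibility
    rintro ⟨j', hj1, hjℓ, B, hBne, hBsub, hBsup⟩
    have hnewB : newb ∉ B := by
      intro hnB
      have hxn : (⟨ℓ - 1, by omega⟩ : Fin ℓ) ∈ B.sup id :=
        Finset.mem_sup.2 ⟨newb, hnB, Finset.mem_insert_self _ _⟩
      rw [hBsup] at hxn
      simp at hxn
      omega
    have hBmem : ∀ c ∈ B, c ∈ phat.parts ∨ (c ≠ b ∧ c ∈ p.parts) := by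
      intro c hc
      have := (hmem c).1 (hBsub.1 hc)
      rcases this with h | h | rfl
      · exact Or.inl h
      · exact Or.inr h
      · exact absurd hc hnewB
    -- elements of b are not in B.sup id
    have hbdisj : ∀ x ∈ b, x ∉ B.sup id := by
      intro x hxb hxB
      obtain ⟨c, hc, hxc⟩ := Finset.mem_sup.1 hxB
      rcases hBmem c hc with h | ⟨hcb, h⟩
      · have h1 := hsubh c h x hxc
        have h2 := hsubp b hb x hxb
        omega
      · exact Finset.disjoint_left.1 (p.disjoint h hb hcb) hxc hxb
    obtain ⟨x0, hx0⟩ := hbne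
    have hx0lt := hsubp b hb x0 hx0
    have hj'lt : j' < ℓ - j - 1 := by
      have := hbdisj x0 hx0
      rw [hBsup] at this
      simp at this
      omega
    -- B contains no phat parts
    have hBp : ∀ c ∈ B, c ≠ b ∧ c ∈ p.parts := by
      intro c hc
      rcases hBmem c hc with h | h
      · exfalso
        obtain ⟨y, hy⟩ := phat.nonempty_of_mem_parts h
        have hyB : y ∈ B.sup id := Finset.mem_sup.2 ⟨c, hc, hy⟩
        rw [hBsup] at hyB
        simp at hyB
        have := hsubh c h y hy
        omega
      · exact h
    apply hpirr
    refine ⟨j', hj1, hj'lt, B, hBne, ?_, hBsup⟩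
    rw [Finset.ssubset_iff_of_subset (fun c hc => (hBp c hc).2)]
    exact ⟨b, hb, fun hbB => (hBp b hbB).1 rfl⟩
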